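/- For the string w = 11221122110001100110011 over the alphabet Σ = {0,1,2}, the templated assembly index satisfies TAI(w) ≤ 11. -/

import Mathlib

/-- `u` is a nonempty contiguous substring (infix) of `w`. -/
def IsSub {α : Type} (w u : List α) : Prop := u ≠ [] ∧ u <:+: w

/-- A canonical assembly plan for `w`: a finite sequence of nonempty substrings of `w`
in which each term is either a single letter or the concatenation (again a substring
of `w`) of two earlier terms, and which contains `w`. -/
def IsCPlan {α : Type} (w : List α) (p : List (List α)) : Prop :=
  (∀ i (h : i < p.length),
      (∃ a : α, p[i]'h = [a]) ∨
      ∃ j k, ∃ hj : j < i, ∃ hk : k < i,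
        p[i]'h = (p[j]'(hj.trans h)) ++ (p[k]'(hk.trans h))) ∧
  (∀ x ∈ p, IsSub w x) ∧
  w ∈ p

/-- The number of composite (join) steps of a canonical plan: the number of terms
that are not single letters. -/
def ccost {α : Type} (p : List (List α)) : ℕ :=
  (p.filter fun x => x.length ≠ 1).length

/-- The canonical assembly index: the minimal number of join steps over all
canonical assembly plans for `w`. -/
noncomputable def ASI {α : Type} (w : List α) : ℕ :=
  sInf {n | ∃ p, IsCPlan w p ∧ ccost p = n}

/-- A block-compressed template for `w`: obtained from a nonempty contiguous substring
of `w` by partitioning it into contiguous nonempty blocks and replacing each block in a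
nonempty proper subset of the blocks by a single wildcard `none`. -/
def IsTemplate {α : Type} (w : List α) (T : List (Option α)) : Prop :=
  ∃ bs : List (List α × Bool),
    (∀ b ∈ bs, b.1 ≠ []) ∧
    IsSub w (bs.map Prod.fst).flatten ∧
    (∃ b ∈ bs, b.2 = true) ∧ (∃ b ∈ bs, b.2 = false) ∧
    T = (bs.map fun b => if b.2 then [(none : Option α)] else b.1.map some).flatten

/-- The object set `O*`: nonempty substrings of `w` (wildcard-free) together with
block-compressed templates for `w`. -/
def Obj {α : Type} (w : List α) (x : List (Option α)) : Prop :=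
  (∃ u : List α, IsSub w u ∧ x = u.map some) ∨ IsTemplate w x

/-- `subst T S u` replaces the symbol of `T` at each position in `S` by the string `u`,
leaving all other positions unchanged. -/
def subst {α : Type} (T : List (Option α)) (S : Finset ℕ) (u : List (Option α)) :
    List (Option α) :=
  ((List.range T.length).map fun i => if i ∈ S then u else [T.getD i none]).flatten

/-- A templated assembly plan for `w`: each term is a monomer (a letter or the
wildcard), or a concatenation in `O*` of two earlier terms, or obtained from an earlier
template `T` and an earlier term `u` by replacing the wildcards at a nonempty set `S`
of wildcard positions of `T` by `u`, with result in `O*`; the plan contains `w`. -/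
def IsTPlan {α : Type} (w : List α) (p : List (List (Option α))) : Prop :=
  (∀ i (h : i < p.length),
      (∃ a : α, p[i]'h = [some a]) ∨ (p[i]'h = [(none : Option α)]) ∨
      (∃ j k, ∃ hj : j < i, ∃ hk : k < i,
        p[i]'h = (p[j]'(hj.trans h)) ++ (p[k]'(hk.trans h)) ∧ Obj w (p[i]'h)) ∨
      (∃ j k, ∃ hj : j < i, ∃ hk : k < i, ∃ S : Finset ℕ,
        IsTemplate w (p[j]'(hj.trans h)) ∧ S.Nonempty ∧
        (∀ q ∈ S, (p[j]'(hj.trans h))[q]? = some none) ∧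
        p[i]'h = subst (p[j]'(hj.trans h)) S (p[k]'(hk.trans h)) ∧ Obj w (p[i]'h))) ∧
  (w.map some) ∈ p

/-- The number of composite steps (concatenations and instantiations) of a templated
plan: the number of terms that are not monomers. -/
def tcost {α : Type} (p : List (List (Option α))) : ℕ :=
  (p.filter fun x => x.length ≠ 1).length

/-- The templated assembly index: the minimal number of composite steps over all
templated assembly plans for `w`. -/
noncomputable def TAI {α : Type} (w : List α) : ℕ :=
  sInf {n | ∃ p, IsTPlan w p ∧ tcost p = n}

/-- The string w = 11221122110001100110011 over the alphabet Σ = {0,1,2}. -/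
def wEx : List (Fin 3) := [1,1,2,2,1,1,2,2,1,1,0,0,0,1,1,0,0,1,1,0,0,1,1]

/-- Explicit templated assembly plan witnessing `TAI wEx ≤ 11`. -/
def exP : List (List (Option (Fin 3))) :=
  [[some 1], [some 2], [some 0], [none],
   [some 1, some 1],                -- 4 : 11 = 0 ++ 0
   [some 2, some 2],                -- 5 : 22 = 1 ++ 1
   [some 0, some 0],                -- 6 : 00 = 2 ++ 2
   [some 1, some 1, none],          -- 7 : 11* = 4 ++ 3
   [some 1, some 1, none, some 1, some 1],  -- 8 : 11*11 = 7 ++ 4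
   [some 1, some 1, none, some 1, some 1, none, some 1, some 1], -- 9 : 11*11*11 = 7 ++ 8
   ([1,1,2,2,1,1,2,2,1,1] : List (Fin 3)).map some,  -- 10 : subst 9 {2,5} 5
   ([1,1,0,0,1,1,0,0,1,1] : List (Fin 3)).map some,  -- 11 : subst 9 {2,5} 6
   [some 0, some 0, some 0],        -- 12 : 000 = 6 ++ 2
   ([1,1,2,2,1,1,2,2,1,1,0,0,0] : List (Fin 3)).map some, -- 13 : 10 ++ 12
   wEx.map some]                    -- 14 : 13 ++ 11

lemma tmpl7 : IsTemplate wEx [some 1, some 1, none] :=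
  ⟨[([1,1],false),([2,2],true)], by decide, ⟨by decide, by decide⟩,
    by decide, by decide, by decide⟩

lemma tmpl8 : IsTemplate wEx [some 1, some 1, none, some 1, some 1] :=
  ⟨[([1,1],false),([2,2],true),([1,1],false)], by decide, ⟨by decide, by decide⟩,
    by decide, by decide, by decide⟩

lemma tmpl9 :
    IsTemplate wEx [some 1, some 1, none, some 1, some 1, none, some 1, some 1] :=
  ⟨[([1,1],false),([2,2],true),([1,1],false),([2,2],true),([1,1],false)],
    by decide, ⟨by decide, by decide⟩, by decide, by decide, by decide⟩

lemma obj_sub (u : List (Fin 3)) (h1 : u ≠ []) (h2 : u <:+: wEx) :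
    Obj wEx (u.map some) := Or.inl ⟨u, ⟨h1, h2⟩, rfl⟩

lemma exP_plan : IsTPlan wEx exP := by
  constructor
  · intro i h
    simp only [exP, List.length] at h
    interval_cases i
    · exact Or.inl ⟨1, rfl⟩
    · exact Or.inl ⟨2, rfl⟩
    · exact Or.inl ⟨0, rfl⟩
    · exact Or.inr (Or.inl rfl)
    · refine Or.inr (Or.inr (Or.inl ⟨0, 0, by omega, by omega, ?_, ?_⟩))
      · rfl
      · exact obj_sub [1,1] (by decide) (by decide)
    · refine Or.inr (Or.inr (Or.inl ⟨1, 1, by omega, by omega, ?_, ?_⟩))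
      · rfl
      · exact obj_sub [2,2] (by decide) (by decide)
    · refine Or.inr (Or.inr (Or.inl ⟨2, 2, by omega, by omega, ?_, ?_⟩))
      · rfl
      · exact obj_sub [0,0] (by decide) (by decide)
    · refine Or.inr (Or.inr (Or.inl ⟨4, 3, by omega, by omega, ?_, ?_⟩))
      · rfl
      · exact Or.inr tmpl7
    · refine Or.inr (Or.inr (Or.inl ⟨7, 4, by omega, by omega, ?_, ?_⟩))
      · rfl
      · exact Or.inr tmpl8
    · refine Or.inr (Or.inr (Or.inl ⟨7, 8, by omega, by omega, ?_, ?_⟩))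
      · rfl
      · exact Or.inr tmpl9
    · refine Or.inr (Or.inr (Or.inr ⟨9, 5, by omega, by omega, {2, 5}, tmpl9,
        ⟨2, by decide⟩, ?_, ?_, ?_⟩))
      · intro q hq; fin_cases hq <;> rfl
      · rfl
      · exact obj_sub [1,1,2,2,1,1,2,2,1,1] (by decide) (by decide)
    · refine Or.inr (Or.inr (Or.inr ⟨9, 6, by omega, by omega, {2, 5}, tmpl9,
        ⟨2, by decide⟩, ?_, ?_, ?_⟩))
      · intro q hq; fin_cases hq <;> rfl
      · rfl
      · exact obj_sub [1,1,0,0,1,1,0,0,1,1] (by decide) (by decide)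
    · refine Or.inr (Or.inr (Or.inl ⟨6, 2, by omega, by omega, ?_, ?_⟩))
      · rfl
      · exact obj_sub [0,0,0] (by decide) (by decide)
    · refine Or.inr (Or.inr (Or.inl ⟨10, 12, by omega, by omega, ?_, ?_⟩))
      · rfl
      · exact obj_sub [1,1,2,2,1,1,2,2,1,1,0,0,0] (by decide) (by decide)
    · refine Or.inr (Or.inr (Or.inl ⟨13, 11, by omega, by omega, ?_, ?_⟩))
      · rfl
      · exact obj_sub wEx (by decide) (List.infix_refl _)
  · decide

/-- For w = 11221122110001100110011 over {0,1,2}, the templated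
assembly index satisfies TAI(w) ≤ 11. -/

theorem tai_wEx_le_eleven : TAI wEx ≤ 11 := by
  have h : 11 ∈ {n | ∃ p, IsTPlan wEx p ∧ tcost p = n} := ⟨exP, exP_plan, by decide⟩
  exact Nat.sInf_le h
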